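/- Suppose A belongs to the class 𝒜, Φ satisfies condition δ2 and Φ satisfies condition (*). Then for each d ∈ (0,1) and each ε > 0 there exists δ = δ(d,ε) > 0 such that for any x̄, ȳ ∈ l_Φ^A(X) with ρ_Φ^A(x̄) ≤ d and ρ_Φ^A(ȳ) ≤ δ, one has |ρ_Φ^A(x̄ + ȳ) − ρ_Φ^A(x̄)| < ε. -/

import Mathlib

open Filter Topology

/-- An Orlicz function: convex, nondecreasing, continuous on `[0,∞)`,
vanishing at `0`, positive on `(0,∞)`, tending to `∞` at `∞`. -/
structure IsOrliczFn (φ : ℝ → ℝ) : Prop where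
  convexOn : ConvexOn ℝ (Set.Ici (0 : ℝ)) φ
  monotoneOn : MonotoneOn φ (Set.Ici (0 : ℝ))
  continuousOn : ContinuousOn φ (Set.Ici (0 : ℝ))
  map_zero : φ 0 = 0
  pos : ∀ t : ℝ, 0 < t → 0 < φ t
  tendsto_atTop : Filter.Tendsto φ Filter.atTop Filter.atTop

/-- A Musielak-Orlicz function: a sequence of Orlicz functions. -/
def IsMusielakOrlicz (Φ : ℕ → ℝ → ℝ) : Prop := ∀ n, IsOrliczFn (Φ n)

/-- Condition δ₂ for a Musielak-Orlicz function. -/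
def MOCondDelta2 (Φ : ℕ → ℝ → ℝ) : Prop :=
  ∃ K > (0 : ℝ), ∃ δ > (0 : ℝ), ∃ c : ℕ → ℝ, (∀ n, 0 ≤ c n) ∧ Summable c ∧
    ∀ n : ℕ, ∀ x : ℝ, 0 ≤ x → Φ n x ≤ δ → Φ n (2 * x) ≤ K * Φ n x + c n

/-- Condition (*) for a Musielak-Orlicz function. -/
def MOCondStar (Φ : ℕ → ℝ → ℝ) : Prop :=
  ∀ ε : ℝ, ε ∈ Set.Ioo (0 : ℝ) 1 → ∃ δ > (0 : ℝ), ∀ n : ℕ, ∀ u : ℝ, 0 ≤ u →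
    Φ n u < 1 - ε → Φ n ((1 + δ) * u) ≤ 1

/-- The class 𝒜 of infinite matrices: every column is nonzero. -/
def MatrixClassA (a : ℕ → ℕ → ℝ) : Prop := ∀ k, ∃ n, a n k ≠ 0

/-- A triangle matrix: nonzero diagonal, zero above the diagonal. -/
def IsTriangle (a : ℕ → ℕ → ℝ) : Prop := (∀ n, a n n ≠ 0) ∧ ∀ n k, n < k → a n k = 0

/-- The `n`-th row sum `∑_k |a_{nk}| ‖x_k‖`. -/
noncomputable def rowSum {X : Type*} [NormedAddCommGroup X]
    (a : ℕ → ℕ → ℝ) (x : ℕ → X) (n : ℕ) : ℝ :=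
  ∑' k, |a n k| * ‖x k‖

/-- Membership in the generalized Musielak-Orlicz sequence space `l_Φ^A(X)`:
`x` is a bounded sequence whose row sums are finite and
`∑_n φ_n(rowSum_n / σ) < ∞` for some `σ > 0`. -/
def MemL {X : Type*} [NormedAddCommGroup X]
    (Φ : ℕ → ℝ → ℝ) (a : ℕ → ℕ → ℝ) (x : ℕ → X) : Prop :=
  (∃ C : ℝ, ∀ k, ‖x k‖ ≤ C) ∧ (∀ n, Summable fun k => |a n k| * ‖x k‖) ∧
    ∃ σ > (0 : ℝ), Summable fun n => Φ n (rowSum a x n / σ)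

/-- Membership in `h_Φ^A(X)`: as `MemL` but for every `σ > 0`. -/
def MemH {X : Type*} [NormedAddCommGroup X]
    (Φ : ℕ → ℝ → ℝ) (a : ℕ → ℕ → ℝ) (x : ℕ → X) : Prop :=
  (∃ C : ℝ, ∀ k, ‖x k‖ ≤ C) ∧ (∀ n, Summable fun k => |a n k| * ‖x k‖) ∧
    ∀ σ > (0 : ℝ), Summable fun n => Φ n (rowSum a x n / σ)

/-- The Luxemburg-type norm `‖x‖_Φ^A`. -/
noncomputable def ANorm {X : Type*} [NormedAddCommGroup X]
    (Φ : ℕ → ℝ → ℝ) (a : ℕ → ℕ → ℝ) (x : ℕ → X) : ℝ :=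
  sInf {σ : ℝ | 0 < σ ∧ (Summable fun n => Φ n (rowSum a x n / σ)) ∧
    (∑' n, Φ n (rowSum a x n / σ)) ≤ 1}

/-- The modular `ρ_Φ^A(x) = ∑_n φ_n(∑_k |a_{nk}| ‖x_k‖)`. -/
noncomputable def rhoA {X : Type*} [NormedAddCommGroup X]
    (Φ : ℕ → ℝ → ℝ) (a : ℕ → ℕ → ℝ) (x : ℕ → X) : ℝ :=
  ∑' n, Φ n (rowSum a x n)

/-- The `m`-th section of a sequence: first `m` coordinates kept, rest zero. -/
def sect {X : Type*} [Zero X] (x : ℕ → X) (m : ℕ) : ℕ → X :=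
  fun k => if k < m then x k else 0

section helpers
variable {Φ : ℕ → ℝ → ℝ}

lemma phi_nonneg (hΦ : IsMusielakOrlicz Φ) (n : ℕ) {t : ℝ} (ht : 0 ≤ t) : 0 ≤ Φ n t := by
  have h := (hΦ n).monotoneOn (Set.mem_Ici.mpr le_rfl) (Set.mem_Ici.mpr ht) ht
  rwa [(hΦ n).map_zero] at h

lemma phi_mono (hΦ : IsMusielakOrlicz Φ) (n : ℕ) {s t : ℝ} (hs : 0 ≤ s) (hst : s ≤ t) :
    Φ n s ≤ Φ n t :=
  (hΦ n).monotoneOn (Set.mem_Ici.mpr hs) (Set.mem_Ici.mpr (hs.trans hst)) hst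

lemma phi_cvx (hΦ : IsMusielakOrlicz Φ) (n : ℕ) {u w s : ℝ} (hu : 0 ≤ u) (hw : 0 ≤ w)
    (hs : 0 ≤ s) (hs1 : s ≤ 1) :
    Φ n ((1 - s) * u + s * w) ≤ (1 - s) * Φ n u + s * Φ n w := by
  have h := (hΦ n).convexOn.2 (Set.mem_Ici.mpr hu) (Set.mem_Ici.mpr hw)
    (show (0:ℝ) ≤ 1 - s by linarith) hs (by ring)
  simpa [smul_eq_mul] using h

variable {K δ0 : ℝ} {c : ℕ → ℝ}

lemma summable_double (hΦ : IsMusielakOrlicz Φ) (hδ0 : 0 < δ0)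
    (hc : ∀ n, 0 ≤ c n) (hcs : Summable c)
    (hdbl : ∀ n : ℕ, ∀ x : ℝ, 0 ≤ x → Φ n x ≤ δ0 → Φ n (2 * x) ≤ K * Φ n x + c n)
    {w : ℕ → ℝ} (hw : ∀ n, 0 ≤ w n)
    (hs : Summable fun n => Φ n (w n)) : Summable fun n => Φ n (2 * w n) := by
  have h0 : Tendsto (fun n => Φ n (w n)) atTop (𝓝 0) := hs.tendsto_atTop_zero
  obtain ⟨N, hN⟩ := (eventually_atTop).mp (h0.eventually_lt_const hδ0)
  rw [← summable_nat_add_iff N]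
  refine Summable.of_nonneg_of_le
    (fun n => phi_nonneg hΦ _ (by have := hw (n + N); linarith))
    (fun n => ?_) ((((summable_nat_add_iff N).mpr hs).mul_left K).add
      ((summable_nat_add_iff N).mpr hcs))
  exact hdbl _ _ (hw _) (hN _ (Nat.le_add_left N n)).le

lemma summable_scale (hΦ : IsMusielakOrlicz Φ) (hδ0 : 0 < δ0)
    (hc : ∀ n, 0 ≤ c n) (hcs : Summable c)
    (hdbl : ∀ n : ℕ, ∀ x : ℝ, 0 ≤ x → Φ n x ≤ δ0 → Φ n (2 * x) ≤ K * Φ n x + c n)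
    {L : ℝ} (hL : 0 ≤ L) {w : ℕ → ℝ} (hw : ∀ n, 0 ≤ w n)
    (hs : Summable fun n => Φ n (w n)) : Summable fun n => Φ n (L * w n) := by
  obtain ⟨j, hj⟩ : ∃ j : ℕ, L ≤ 2 ^ j := by
    obtain ⟨m, hm⟩ := exists_nat_ge L
    exact ⟨m, hm.trans (by exact_mod_cast (Nat.lt_two_pow_self (n := m)).le)⟩
  have hpow : ∀ i : ℕ, Summable fun n => Φ n (2 ^ i * w n) := by
    intro i
    induction i with
    | zero => simpa using hs
    | succ i ih =>
      have := summable_double hΦ hδ0 hc hcs hdbl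
        (w := fun n => 2 ^ i * w n) (fun n => mul_nonneg (by positivity) (hw n)) ih
      refine this.congr fun n => ?_
      ring_nf
  refine Summable.of_nonneg_of_le (fun n => phi_nonneg hΦ _ (mul_nonneg hL (hw n)))
    (fun n => phi_mono hΦ _ (mul_nonneg hL (hw n))
      (mul_le_mul_of_nonneg_right hj (hw n))) (hpow j)

lemma exists_pos_lb (g : ℕ → ℝ) (N : ℕ) (h : ∀ n < N, 0 < g n) :
    ∃ δ > (0:ℝ), ∀ n < N, δ ≤ g n := by
  induction N with
  | zero => exact ⟨1, one_pos, fun n hn => absurd hn (Nat.not_lt_zero n)⟩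
  | succ N ih =>
    obtain ⟨δ, hδ, hb⟩ := ih (fun n hn => h n (hn.trans (Nat.lt_succ_self N)))
    refine ⟨min δ (g N), lt_min hδ (h N (Nat.lt_succ_self N)), fun n hn => ?_⟩
    rcases Nat.lt_succ_iff_lt_or_eq.mp hn with h' | h'
    · exact (min_le_left _ _).trans (hb n h')
    · subst h'; exact min_le_right _ _

lemma exists_small_arg (hΦ : IsMusielakOrlicz Φ) (n : ℕ) {M ε' : ℝ} (hM : 0 ≤ M)
    (hε' : 0 < ε') : ∃ t > (0:ℝ), Φ n (M * t) < ε' := by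
  have hmaps : Set.MapsTo (fun t : ℝ => M * t) (Set.Ici 0) (Set.Ici 0) :=
    fun t ht => Set.mem_Ici.mpr (mul_nonneg hM (Set.mem_Ici.mp ht))
  have hcont : ContinuousWithinAt (fun t => Φ n (M * t)) (Set.Ici 0) 0 :=
    ((hΦ n).continuousOn.comp ((continuous_const.mul continuous_id).continuousOn) hmaps)
      |>.continuousWithinAt (Set.mem_Ici.mpr le_rfl)
  have h0 : Tendsto (fun t => Φ n (M * t)) (𝓝[Set.Ici 0] 0) (𝓝 0) := by
    simpa [ContinuousWithinAt, (hΦ n).map_zero] using hcont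
  have hev : ∀ᶠ t in 𝓝[Set.Ioi (0:ℝ)] 0, Φ n (M * t) < ε' :=
    (h0.eventually_lt_const hε').filter_mono (nhdsWithin_mono _ Set.Ioi_subset_Ici_self)
  obtain ⟨t, ht, hlt⟩ := (eventually_mem_nhdsWithin.and hev).exists
  exact ⟨t, ht, hlt⟩

set_option maxHeartbeats 2000000 in
lemma lemmaB (hΦ : IsMusielakOrlicz Φ) (hK : 1 ≤ K) (hδ0 : 0 < δ0)
    (hc : ∀ n, 0 ≤ c n) (hcs : Summable c)
    (hdbl : ∀ n : ℕ, ∀ x : ℝ, 0 ≤ x → Φ n x ≤ δ0 → Φ n (2 * x) ≤ K * Φ n x + c n)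
    {L : ℝ} (hL : 0 ≤ L) {η : ℝ} (hη : 0 < η) :
    ∃ δ > (0:ℝ), ∀ w : ℕ → ℝ, (∀ n, 0 ≤ w n) → (Summable fun n => Φ n (w n)) →
      (∑' n, Φ n (w n)) ≤ δ → (∑' n, Φ n (L * w n)) ≤ η := by
  have hK0 : (0:ℝ) < K := lt_of_lt_of_le one_pos hK
  obtain ⟨j, hj⟩ : ∃ j : ℕ, L ≤ 2 ^ j := by
    obtain ⟨m, hm⟩ := exists_nat_ge L
    exact ⟨m, hm.trans (by exact_mod_cast (Nat.lt_two_pow_self (n := m)).le)⟩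
  set S : ℝ := ∑ l ∈ Finset.range j, K ^ l with hSdef
  have hS0 : 0 ≤ S := Finset.sum_nonneg fun l _ => le_of_lt (pow_pos hK0 l)
  set θ : ℝ := min δ0 (η / 2) with hθdef
  have hθ : 0 < θ := lt_min hδ0 (by positivity)
  set η₂ : ℝ := θ / (2 * (S + 1)) with hη₂def
  have hη₂ : 0 < η₂ := by positivity
  obtain ⟨N, hNtail⟩ := eventually_atTop.mp
    ((tendsto_sum_nat_add c).eventually_lt_const hη₂)
  have htails : ∑' k, c (k + N) < η₂ := hNtail N le_rfl
  -- head data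
  have hchoice : ∀ n : ℕ, ∃ t > (0:ℝ), Φ n ((2:ℝ) ^ j * t) < η / (2 * (N + 1)) :=
    fun n => exists_small_arg hΦ n (by positivity) (by positivity)
  choose t ht0 htlt using hchoice
  obtain ⟨δh, hδh0, hδh⟩ := exists_pos_lb (fun n => Φ n (t n)) N
    (fun n _ => (hΦ n).pos (t n) (ht0 n))
  refine ⟨min (θ / (2 * K ^ j)) (δh / 2), lt_min (by positivity) (by positivity),
    fun w hw hsw hsum => ?_⟩
  set δ : ℝ := min (θ / (2 * K ^ j)) (δh / 2) with hδdef
  have hδ1 : δ ≤ θ / (2 * K ^ j) := min_le_left _ _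
  have hδ2 : δ ≤ δh / 2 := min_le_right _ _
  have hterm : ∀ n, Φ n (w n) ≤ δ := fun n =>
    (Summable.le_tsum hsw n (fun m _ => phi_nonneg hΦ _ (hw m))).trans hsum
  have hterm0 : ∀ n, 0 ≤ Φ n (w n) := fun n => phi_nonneg hΦ _ (hw n)
  have hcsN : Summable fun k => c (k + N) := (summable_nat_add_iff N).mpr hcs
  have hcn : ∀ n, N ≤ n → c n ≤ η₂ := by
    intro n hn
    have h1 : c (n - N + N) ≤ ∑' k, c (k + N) :=
      Summable.le_tsum hcsN (n - N) (fun m _ => hc _)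
    rw [Nat.sub_add_cancel hn] at h1
    exact h1.trans htails.le
  -- key δ-smallness bound
  have hKjδ : K ^ j * δ ≤ θ / 2 := by
    have := mul_le_mul_of_nonneg_left hδ1 (le_of_lt (pow_pos hK0 j))
    calc K ^ j * δ ≤ K ^ j * (θ / (2 * K ^ j)) := this
      _ = θ / 2 := by field_simp
  have hSη₂ : S * η₂ ≤ θ / 2 := by
    have h1 : S * η₂ ≤ (S + 1) * η₂ := by nlinarith
    have h2 : (S + 1) * η₂ = θ / 2 := by
      rw [hη₂def]; field_simp
    linarith
  -- tail pointwise bound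
  have htailpt : ∀ n, N ≤ n → ∀ i ≤ j,
      Φ n (2 ^ i * w n) ≤ K ^ i * Φ n (w n) + (∑ l ∈ Finset.range i, K ^ l) * c n := by
    intro n hn i hij
    induction i with
    | zero => simp [hterm0 n]
    | succ i ih =>
      have hij' : i ≤ j := Nat.le_of_succ_le hij
      have ihb := ih hij'
      have hTle : (∑ l ∈ Finset.range i, K ^ l) ≤ S :=
        Finset.sum_le_sum_of_subset_of_nonneg
          (Finset.range_subset_range.mpr hij') (fun l _ _ => le_of_lt (pow_pos hK0 l))
      have hbound : K ^ i * Φ n (w n) + (∑ l ∈ Finset.range i, K ^ l) * c n ≤ δ0 := by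
        have h1 : K ^ i * Φ n (w n) ≤ K ^ j * δ :=
          mul_le_mul (pow_le_pow_right₀ hK hij') (hterm n) (hterm0 n) (le_of_lt (pow_pos hK0 j))
        have h2 : (∑ l ∈ Finset.range i, K ^ l) * c n ≤ S * η₂ :=
          mul_le_mul hTle (hcn n hn) (hc n) hS0
        have : θ ≤ δ0 := min_le_left _ _
        linarith
      have hx0 : (0:ℝ) ≤ 2 ^ i * w n := mul_nonneg (by positivity) (hw n)
      have hΦi : Φ n (2 ^ i * w n) ≤ δ0 := ihb.trans hbound
      have hd := hdbl n (2 ^ i * w n) hx0 hΦi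
      have harg : (2:ℝ) * (2 ^ i * w n) = 2 ^ (i + 1) * w n := by ring
      rw [harg] at hd
      calc Φ n (2 ^ (i + 1) * w n) ≤ K * Φ n (2 ^ i * w n) + c n := hd
        _ ≤ K * (K ^ i * Φ n (w n) + (∑ l ∈ Finset.range i, K ^ l) * c n) + c n :=
            by nlinarith [ihb]
        _ = K ^ (i + 1) * Φ n (w n) + (∑ l ∈ Finset.range (i + 1), K ^ l) * c n := by
            rw [geom_sum_succ]; ring
  -- summabilities
  have hsum2j : Summable fun n => Φ n (2 ^ j * w n) :=
    summable_scale hΦ hδ0 hc hcs hdbl (by positivity) hw hsw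
  have hswN : Summable fun n => Φ (n + N) (w (n + N)) := (summable_nat_add_iff N).mpr hsw
  have hmajsum : Summable fun n => K ^ j * Φ (n + N) (w (n + N)) + S * c (n + N) := by
    refine (hswN.mul_left _).add ?_
    exact ((summable_nat_add_iff N).mpr hcs).mul_left _
  -- tail tsum bound
  have htsumw_tail : ∑' n, Φ (n + N) (w (n + N)) ≤ δ := by
    have hsplit := Summable.sum_add_tsum_nat_add N hsw
    have hhead0 : 0 ≤ ∑ i ∈ Finset.range N, Φ i (w i) :=
      Finset.sum_nonneg fun i _ => hterm0 i
    linarith [hsplit, hsum, hhead0]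
  have htailsum : ∑' n, Φ (n + N) (2 ^ j * w (n + N)) ≤ η / 2 := by
    have h1 : ∑' n, Φ (n + N) (2 ^ j * w (n + N)) ≤
        ∑' n, (K ^ j * Φ (n + N) (w (n + N)) + S * c (n + N)) := by
      refine Summable.tsum_le_tsum (fun n => ?_) ((summable_nat_add_iff N).mpr hsum2j) hmajsum
      have := htailpt (n + N) (Nat.le_add_left N n) j le_rfl
      refine this.trans ?_
      rw [hSdef]
    have h2 : ∑' n, (K ^ j * Φ (n + N) (w (n + N)) + S * c (n + N)) =
        K ^ j * (∑' n, Φ (n + N) (w (n + N))) + S * (∑' n, c (n + N)) := by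
      rw [Summable.tsum_add (hswN.mul_left _) (hcsN.mul_left _), tsum_mul_left, tsum_mul_left]
    have h3 : K ^ j * (∑' n, Φ (n + N) (w (n + N))) ≤ K ^ j * δ :=
      mul_le_mul_of_nonneg_left htsumw_tail (le_of_lt (pow_pos hK0 j))
    have h4 : S * (∑' n, c (n + N)) ≤ S * η₂ :=
      mul_le_mul_of_nonneg_left htails.le hS0
    have hθη : θ ≤ η / 2 := min_le_right _ _
    calc ∑' n, Φ (n + N) (2 ^ j * w (n + N)) ≤ _ := h1
      _ = _ := h2
      _ ≤ K ^ j * δ + S * η₂ := by linarith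
      _ ≤ θ := by linarith
      _ ≤ η / 2 := hθη
  -- head bound
  have hheadsum : ∑ n ∈ Finset.range N, Φ n (2 ^ j * w n) ≤ η / 2 := by
    have hptb : ∀ n ∈ Finset.range N, Φ n (2 ^ j * w n) ≤ η / (2 * (N + 1)) := by
      intro n hn
      have hnN := Finset.mem_range.mp hn
      have hwt : w n ≤ t n := by
        by_contra hcon
        push_neg at hcon
        have h1 : Φ n (t n) ≤ Φ n (w n) := phi_mono hΦ n (ht0 n).le hcon.le
        have h2 : δh ≤ Φ n (t n) := hδh n hnN
        have h3 : Φ n (w n) ≤ δ := hterm n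
        linarith
      have := phi_mono hΦ n (mul_nonneg (by positivity) (hw n))
        (mul_le_mul_of_nonneg_left hwt (by positivity : (0:ℝ) ≤ 2 ^ j))
      exact this.trans (htlt n).le
    calc ∑ n ∈ Finset.range N, Φ n (2 ^ j * w n)
        ≤ ∑ _n ∈ Finset.range N, η / (2 * (N + 1)) := Finset.sum_le_sum hptb
      _ = N * (η / (2 * (N + 1))) := by rw [Finset.sum_const, Finset.card_range]; ring
      _ ≤ η / 2 := by
          rw [mul_div_assoc', div_le_div_iff₀ (by positivity) two_pos]
          nlinarith [Nat.cast_nonneg (α := ℝ) N]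
  -- combine
  have hcomb : ∑' n, Φ n (2 ^ j * w n) ≤ η := by
    have hsplit := Summable.sum_add_tsum_nat_add N hsum2j
    linarith [hsplit]
  have hLle : ∑' n, Φ n (L * w n) ≤ ∑' n, Φ n (2 ^ j * w n) := by
    refine Summable.tsum_le_tsum (fun n => phi_mono hΦ n (mul_nonneg hL (hw n))
      (mul_le_mul_of_nonneg_right hj (hw n)))
      (summable_scale hΦ hδ0 hc hcs hdbl hL hw hsw) hsum2j
  linarith

set_option maxHeartbeats 2000000 in
lemma lemmaA (hΦ : IsMusielakOrlicz Φ) (hK : 1 ≤ K) (hδ0 : 0 < δ0)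
    (hc : ∀ n, 0 ≤ c n) (hcs : Summable c)
    (hdbl : ∀ n : ℕ, ∀ x : ℝ, 0 ≤ x → Φ n x ≤ δ0 → Φ n (2 * x) ≤ K * Φ n x + c n)
    (hstar : MOCondStar Φ) {d ε : ℝ} (hd : d ∈ Set.Ioo (0:ℝ) 1) (hε : 0 < ε) :
    ∃ t > (0:ℝ), ∀ w : ℕ → ℝ, (∀ n, 0 ≤ w n) → (Summable fun n => Φ n (w n)) →
      (∑' n, Φ n (w n)) ≤ d →
      (∑' n, Φ n ((1 + t) * w n)) ≤ (∑' n, Φ n (w n)) + ε := by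
  obtain ⟨hd0, hd1⟩ := hd
  have hε₀ : (1 - d) / 2 ∈ Set.Ioo (0:ℝ) 1 := ⟨by linarith, by linarith⟩
  obtain ⟨ds, hds0, hds⟩ := hstar _ hε₀
  have hK0 : (0:ℝ) < K := lt_of_lt_of_le one_pos hK
  set K2 : ℝ := K + 1 / (ds * δ0) with hK2def
  have hK2pos : 0 < K2 := by rw [hK2def]; positivity
  set C : ℝ := ∑' n, c n with hCdef
  have hC0 : 0 ≤ C := tsum_nonneg hc
  set t : ℝ := min ds (min 1 (ε / (K2 * d + C + 1))) with htdef
  have ht0 : 0 < t := lt_min hds0 (lt_min one_pos (by positivity))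
  have htds : t ≤ ds := min_le_left _ _
  have ht1 : t ≤ 1 := (min_le_right _ _).trans (min_le_left _ _)
  have htε : t * (K2 * d + C) ≤ ε := by
    have h1 : t ≤ ε / (K2 * d + C + 1) := (min_le_right _ _).trans (min_le_right _ _)
    have h2 : 0 < K2 * d + C + 1 := by positivity
    have h3 : t * (K2 * d + C + 1) ≤ ε := by
      rw [← div_mul_cancel₀ ε h2.ne']
      exact mul_le_mul_of_nonneg_right h1 (by positivity)
    nlinarith
  refine ⟨t, ht0, fun w hw hsw hsum => ?_⟩
  have hterm : ∀ n, Φ n (w n) ≤ d := fun n =>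
    (Summable.le_tsum hsw n (fun m _ => phi_nonneg hΦ _ (hw m))).trans hsum
  have hterm0 : ∀ n, 0 ≤ Φ n (w n) := fun n => phi_nonneg hΦ _ (hw n)
  have hu0 : (0:ℝ) < 1 / (ds * δ0) := by positivity
  -- pointwise bound
  have hpt : ∀ n, Φ n ((1 + t) * w n) ≤ Φ n (w n) + t * (K2 * Φ n (w n) + c n) := by
    intro n
    by_cases hcase : Φ n (w n) ≤ δ0
    · -- use δ₂
      have hcvx := phi_cvx hΦ n (hw n) (mul_nonneg two_pos.le (hw n)) ht0.le ht1
      have harg : (1 - t) * w n + t * (2 * w n) = (1 + t) * w n := by ring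
      rw [harg] at hcvx
      have hd2 := hdbl n (w n) (hw n) hcase
      have hmul : t * Φ n (2 * w n) ≤ t * (K * Φ n (w n) + c n) :=
        mul_le_mul_of_nonneg_left hd2 ht0.le
      have hKK2 : K * Φ n (w n) + c n ≤ K2 * Φ n (w n) + c n := by
        rw [hK2def]; nlinarith [mul_nonneg hu0.le (hterm0 n)]
      have hmul2 : t * (K * Φ n (w n) + c n) ≤ t * (K2 * Φ n (w n) + c n) :=
        mul_le_mul_of_nonneg_left hKK2 ht0.le
      linarith [hcvx, hmul, hmul2, mul_nonneg ht0.le (hterm0 n)]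
    · -- use (*)
      push_neg at hcase
      have hlt : Φ n (w n) < 1 - (1 - d) / 2 := by linarith [hterm n]
      have hstar' := hds n (w n) (hw n) hlt
      set s : ℝ := t / ds with hsdef
      have hs0 : 0 ≤ s := by rw [hsdef]; positivity
      have hs1 : s ≤ 1 := by rw [hsdef, div_le_one hds0]; exact htds
      have hcvx := phi_cvx hΦ n (u := w n) (w := (1 + ds) * w n) (hw n)
        (mul_nonneg (by linarith : (0:ℝ) ≤ 1 + ds) (hw n)) hs0 hs1
      have harg : (1 - s) * w n + s * ((1 + ds) * w n) = (1 + t) * w n := by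
        rw [hsdef]; field_simp; ring
      rw [harg] at hcvx
      have hsle : s ≤ t * (1 / (ds * δ0)) * Φ n (w n) := by
        rw [hsdef]
        have h1 : t * (1 / (ds * δ0)) * Φ n (w n) = t * Φ n (w n) / (ds * δ0) := by ring
        rw [h1, div_le_div_iff₀ hds0 (by positivity)]
        nlinarith [mul_nonneg (mul_nonneg ht0.le hds0.le)
          (by linarith : (0:ℝ) ≤ Φ n (w n) - δ0)]
      have h5 : t * (1 / (ds * δ0)) * Φ n (w n) ≤ t * (K2 * Φ n (w n) + c n) := by
        rw [hK2def]
        nlinarith [mul_nonneg (mul_nonneg ht0.le hK0.le) (hterm0 n),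
          mul_nonneg ht0.le (hc n)]
      have h6 : s * Φ n ((1 + ds) * w n) ≤ s * 1 :=
        mul_le_mul_of_nonneg_left hstar' hs0
      have h7 : 0 ≤ s * Φ n (w n) := mul_nonneg hs0 (hterm0 n)
      clear_value s t K2
      linarith [hcvx, h6, h7, hsle, h5]
  -- summation
  have hsl : Summable fun n => Φ n ((1 + t) * w n) :=
    summable_scale hΦ hδ0 hc hcs hdbl (by positivity) hw hsw
  have hmaj2 : Summable fun n => K2 * Φ n (w n) + c n := (hsw.mul_left K2).add hcs
  have hmaj : Summable fun n => Φ n (w n) + t * (K2 * Φ n (w n) + c n) :=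
    hsw.add (hmaj2.mul_left t)
  have h1 : (∑' n, Φ n ((1 + t) * w n)) ≤
      ∑' n, (Φ n (w n) + t * (K2 * Φ n (w n) + c n)) := Summable.tsum_le_tsum hpt hsl hmaj
  have h2 : (∑' n, (Φ n (w n) + t * (K2 * Φ n (w n) + c n))) =
      (∑' n, Φ n (w n)) + t * (K2 * (∑' n, Φ n (w n)) + C) := by
    rw [Summable.tsum_add hsw (hmaj2.mul_left t), tsum_mul_left,
      Summable.tsum_add (hsw.mul_left K2) hcs, tsum_mul_left]
  have h3 : t * (K2 * (∑' n, Φ n (w n)) + C) ≤ ε := by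
    have hSig0 : 0 ≤ ∑' n, Φ n (w n) := tsum_nonneg hterm0
    nlinarith [htε, hsum, mul_nonneg ht0.le hK2pos.le]
  linarith [h1, h2.le, h2.ge, h3]

set_option maxHeartbeats 1000000 in
lemma lemmaU (hΦ : IsMusielakOrlicz Φ) (hK : 1 ≤ K) (hδ0 : 0 < δ0)
    (hc : ∀ n, 0 ≤ c n) (hcs : Summable c)
    (hdbl : ∀ n : ℕ, ∀ x : ℝ, 0 ≤ x → Φ n x ≤ δ0 → Φ n (2 * x) ≤ K * Φ n x + c n)
    (hstar : MOCondStar Φ) {d ε : ℝ} (hd : d ∈ Set.Ioo (0:ℝ) 1) (hε : 0 < ε) :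
    ∃ δ > (0:ℝ), ∀ u v : ℕ → ℝ, (∀ n, 0 ≤ u n) → (∀ n, 0 ≤ v n) →
      (Summable fun n => Φ n (u n)) → (Summable fun n => Φ n (v n)) →
      (∑' n, Φ n (u n)) ≤ d → (∑' n, Φ n (v n)) ≤ δ →
      (Summable fun n => Φ n (u n + v n)) ∧
      (∑' n, Φ n (u n + v n)) ≤ (∑' n, Φ n (u n)) + ε := by
  obtain ⟨t, ht0, hA⟩ := lemmaA hΦ hK hδ0 hc hcs hdbl hstar hd (half_pos hε)
  have h1t : (0:ℝ) < 1 + t := by linarith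
  have hL1 : (1:ℝ) ≤ (1 + t) / t := by rw [le_div_iff₀ ht0]; linarith
  obtain ⟨δ, hδpos, hB⟩ := lemmaB hΦ hK hδ0 hc hcs hdbl
    (zero_le_one.trans hL1) (half_pos hε)
  refine ⟨δ, hδpos, fun u v hu hv hsu hsv hdu hδv => ?_⟩
  have hsu' : Summable fun n => Φ n ((1 + t) * u n) :=
    summable_scale hΦ hδ0 hc hcs hdbl h1t.le hu hsu
  have hsv' : Summable fun n => Φ n ((1 + t) / t * v n) :=
    summable_scale hΦ hδ0 hc hcs hdbl (by positivity) hv hsv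
  have hpt : ∀ n, Φ n (u n + v n) ≤ Φ n ((1 + t) * u n) + Φ n ((1 + t) / t * v n) := by
    intro n
    have hXnn : 0 ≤ Φ n ((1 + t) * u n) := phi_nonneg hΦ _ (mul_nonneg h1t.le (hu n))
    have hYnn : 0 ≤ Φ n ((1 + t) / t * v n) :=
      phi_nonneg hΦ _ (mul_nonneg (by positivity) (hv n))
    have hs0 : (0:ℝ) ≤ t / (1 + t) := by positivity
    have hs1 : t / (1 + t) ≤ 1 := by rw [div_le_one h1t]; linarith
    have hcvx := phi_cvx hΦ n (u := (1 + t) * u n) (w := (1 + t) / t * v n)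
      (mul_nonneg h1t.le (hu n)) (mul_nonneg (by positivity) (hv n)) hs0 hs1
    have harg : (1 - t / (1 + t)) * ((1 + t) * u n) + t / (1 + t) * ((1 + t) / t * v n)
        = u n + v n := by field_simp; ring
    rw [harg] at hcvx
    have h1 : (1 - t / (1 + t)) * Φ n ((1 + t) * u n) ≤ Φ n ((1 + t) * u n) := by
      nlinarith [mul_nonneg hs0 hXnn]
    have h2 : t / (1 + t) * Φ n ((1 + t) / t * v n) ≤ Φ n ((1 + t) / t * v n) :=
      mul_le_of_le_one_left hYnn hs1
    linarith
  have hsumu : Summable fun n => Φ n (u n + v n) :=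
    Summable.of_nonneg_of_le (fun n => phi_nonneg hΦ _ (add_nonneg (hu n) (hv n)))
      hpt (hsu'.add hsv')
  refine ⟨hsumu, ?_⟩
  have h1 := Summable.tsum_le_tsum hpt hsumu (hsu'.add hsv')
  rw [Summable.tsum_add hsu' hsv'] at h1
  have h2 := hA u hu hsu hdu
  have h3 := hB v hv hsv hδv
  linarith

end helpers

/-- for `A ∈ 𝒜`, `Φ ∈ δ₂` satisfying condition (*): for each
`d ∈ (0,1)` and `ε > 0` there is `δ > 0` such that `ρ_Φ^A(x̄) ≤ d` and
`ρ_Φ^A(ȳ) ≤ δ` imply `|ρ_Φ^A(x̄+ȳ) - ρ_Φ^A(x̄)| < ε`. -/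
theorem modular_almost_uniform_continuity
    {X : Type*} [NormedAddCommGroup X] [NormedSpace ℝ X] [CompleteSpace X]
    (Φ : ℕ → ℝ → ℝ) (hΦ : IsMusielakOrlicz Φ) (hδ : MOCondDelta2 Φ)
    (hstar : MOCondStar Φ)
    (a : ℕ → ℕ → ℝ) (hA : MatrixClassA a) :
    ∀ d : ℝ, d ∈ Set.Ioo (0 : ℝ) 1 → ∀ ε > (0 : ℝ), ∃ δ > (0 : ℝ),
      ∀ x y : ℕ → X, MemL Φ a x → MemL Φ a y →
        rhoA Φ a x ≤ d → rhoA Φ a y ≤ δ →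
        |rhoA Φ a (x + y) - rhoA Φ a x| < ε := by
  classical
  -- unpack δ₂, upgrading the constant to be ≥ 1
  obtain ⟨K0, hK0pos, δ0, hδ0, c, hc, hcs, hdbl0⟩ := hδ
  set K : ℝ := max K0 1 with hKdef
  have hK : (1:ℝ) ≤ K := le_max_right _ _
  have hdbl : ∀ n : ℕ, ∀ x : ℝ, 0 ≤ x → Φ n x ≤ δ0 → Φ n (2 * x) ≤ K * Φ n x + c n := by
    intro n x hx h
    refine (hdbl0 n x hx h).trans ?_
    have := mul_le_mul_of_nonneg_right (le_max_left K0 1) (phi_nonneg hΦ n hx)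
    linarith
  intro d hd ε hε
  obtain ⟨hd0, hd1⟩ := hd
  set ε' : ℝ := min (ε / 2) ((1 - d) / 4) with hε'def
  have hε'pos : 0 < ε' := lt_min (by linarith) (by linarith)
  have hε'half : ε' ≤ ε / 2 := min_le_left _ _
  have hε'd : ε' ≤ (1 - d) / 4 := min_le_right _ _
  have hd' : (1 + d) / 2 ∈ Set.Ioo (0:ℝ) 1 := ⟨by linarith, by linarith⟩
  obtain ⟨δ₁, hδ₁pos, hU1⟩ := lemmaU hΦ hK hδ0 hc hcs hdbl hstar ⟨hd0, hd1⟩ hε'pos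
  obtain ⟨δ₂, hδ₂pos, hU2⟩ := lemmaU hΦ hK hδ0 hc hcs hdbl hstar hd' hε'pos
  refine ⟨min δ₁ δ₂, lt_min hδ₁pos hδ₂pos, fun x y hx hy hρx hρy => ?_⟩
  obtain ⟨-, hax, σx, hσx, hsx0⟩ := hx
  obtain ⟨-, hay, σy, hσy, hsy0⟩ := hy
  -- basic row-sum facts
  have hRnn : ∀ (z : ℕ → X) (n : ℕ), 0 ≤ rowSum a z n := fun z n =>
    tsum_nonneg fun k => mul_nonneg (abs_nonneg _) (norm_nonneg _)
  have haxy : ∀ n, Summable fun k => |a n k| * ‖(x + y) k‖ := by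
    intro n
    refine Summable.of_nonneg_of_le
      (fun k => mul_nonneg (abs_nonneg _) (norm_nonneg _)) (fun k => ?_)
      ((hax n).add (hay n))
    have : ‖(x + y) k‖ ≤ ‖x k‖ + ‖y k‖ := norm_add_le _ _
    calc |a n k| * ‖(x + y) k‖ ≤ |a n k| * (‖x k‖ + ‖y k‖) :=
          mul_le_mul_of_nonneg_left this (abs_nonneg _)
      _ = |a n k| * ‖x k‖ + |a n k| * ‖y k‖ := by ring
  -- triangle inequalities for row sums
  have htri : ∀ n, rowSum a (x + y) n ≤ rowSum a x n + rowSum a y n := by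
    intro n
    have hpt : ∀ k, |a n k| * ‖(x + y) k‖ ≤ |a n k| * ‖x k‖ + |a n k| * ‖y k‖ := by
      intro k
      have : ‖(x + y) k‖ ≤ ‖x k‖ + ‖y k‖ := norm_add_le _ _
      nlinarith [abs_nonneg (a n k), mul_le_mul_of_nonneg_left this (abs_nonneg (a n k))]
    calc rowSum a (x + y) n ≤ ∑' k, (|a n k| * ‖x k‖ + |a n k| * ‖y k‖) :=
          Summable.tsum_le_tsum hpt (haxy n) ((hax n).add (hay n))
      _ = rowSum a x n + rowSum a y n := Summable.tsum_add (hax n) (hay n)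
  have htri2 : ∀ n, rowSum a x n ≤ rowSum a (x + y) n + rowSum a y n := by
    intro n
    have hpt : ∀ k, |a n k| * ‖x k‖ ≤ |a n k| * ‖(x + y) k‖ + |a n k| * ‖y k‖ := by
      intro k
      have h1 : ‖x k‖ ≤ ‖(x + y) k‖ + ‖y k‖ := by
        have : x k = (x + y) k - y k := by simp
        rw [this]; exact norm_sub_le _ _
      nlinarith [abs_nonneg (a n k), mul_le_mul_of_nonneg_left h1 (abs_nonneg (a n k))]
    calc rowSum a x n ≤ ∑' k, (|a n k| * ‖(x + y) k‖ + |a n k| * ‖y k‖) :=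
          Summable.tsum_le_tsum hpt (hax n) ((haxy n).add (hay n))
      _ = rowSum a (x + y) n + rowSum a y n := Summable.tsum_add (haxy n) (hay n)
  -- summability of modular terms at scale 1
  have hmod : ∀ (z : ℕ → X) (σ : ℝ), 0 < σ →
      (Summable fun n => Φ n (rowSum a z n / σ)) →
      Summable fun n => Φ n (rowSum a z n) := by
    intro z σ hσ hs
    have := summable_scale hΦ hδ0 hc hcs hdbl (L := σ) hσ.le
      (w := fun n => rowSum a z n / σ) (fun n => div_nonneg (hRnn z n) hσ.le) hs
    refine this.congr fun n => ?_
    rw [mul_comm, div_mul_cancel₀ _ hσ.ne']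
  have hsx : Summable fun n => Φ n (rowSum a x n) := hmod x σx hσx hsx0
  have hsy : Summable fun n => Φ n (rowSum a y n) := hmod y σy hσy hsy0
  -- apply lemma U (first time): upper estimate
  have hρx' : (∑' n, Φ n (rowSum a x n)) ≤ d := hρx
  have hρy1 : (∑' n, Φ n (rowSum a y n)) ≤ δ₁ := le_trans hρy (min_le_left _ _)
  have hρy2 : (∑' n, Φ n (rowSum a y n)) ≤ δ₂ := le_trans hρy (min_le_right _ _)
  obtain ⟨hs1, hb1⟩ := hU1 (fun n => rowSum a x n) (fun n => rowSum a y n)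
    (hRnn x) (hRnn y) hsx hsy hρx' hρy1
  have hsxy : Summable fun n => Φ n (rowSum a (x + y) n) :=
    Summable.of_nonneg_of_le (fun n => phi_nonneg hΦ _ (hRnn _ n))
      (fun n => phi_mono hΦ n (hRnn _ n) (htri n)) hs1
  have hupper : rhoA Φ a (x + y) ≤ rhoA Φ a x + ε' := by
    have h1 : (∑' n, Φ n (rowSum a (x + y) n)) ≤
        ∑' n, Φ n (rowSum a x n + rowSum a y n) :=
      Summable.tsum_le_tsum (fun n => phi_mono hΦ n (hRnn _ n) (htri n)) hsxy hs1
    exact h1.trans hb1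
  -- apply lemma U (second time): lower estimate
  have hd'bound : (∑' n, Φ n (rowSum a (x + y) n)) ≤ (1 + d) / 2 := by
    have := hupper
    simp only [rhoA] at this ⊢
    linarith
  obtain ⟨hs2, hb2⟩ := hU2 (fun n => rowSum a (x + y) n) (fun n => rowSum a y n)
    (hRnn _) (hRnn y) hsxy hsy hd'bound hρy2
  have hlower : rhoA Φ a x ≤ rhoA Φ a (x + y) + ε' := by
    have h1 : (∑' n, Φ n (rowSum a x n)) ≤
        ∑' n, Φ n (rowSum a (x + y) n + rowSum a y n) :=
      Summable.tsum_le_tsum (fun n => phi_mono hΦ n (hRnn x n) (htri2 n)) hsx hs2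
    exact h1.trans hb2
  rw [abs_lt]
  constructor
  · simp only [rhoA] at hlower ⊢; linarith
  · simp only [rhoA] at hupper ⊢; linarith
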